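/- Fix an integer p ≥ 1 and let Λ := {(2πi)^p k : k ∈ ℤ} ⊆ ℂ and P⁰ := {f ∈ ℂ[x] : f(0) ∈ Λ and f(1) = 0}. Then: (i) the only f ∈ P⁰ with f′ = 0 is f = 0; (ii) the additive map ℂ[x] → ℂ/Λ sending q to the class of ∫₀¹ q modulo Λ is surjective, and its kernel is exactly the set of derivatives {f′ : f ∈ P⁰}; consequently it induces an isomorphism of abelian groups ℂ[x]/{f′ : f ∈ P⁰} ≅ ℂ/Λ. (This computes the weight-p Deligne–Beilinson cohomology of a point via the path complex: H⁰ = 0 and H¹ ≅ ℂ/ℤ(p).) -/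

import Mathlib

open Polynomial

/-- The lattice `ℤ(p) = (2πi)^p ℤ ⊆ ℂ`. -/
noncomputable def tateLattice (p : ℕ) : AddSubgroup ℂ :=
  AddSubgroup.zmultiples ((2 * Real.pi * Complex.I) ^ p)

/-- `∫₀¹ q := ∑ i, aᵢ/(i+1)` for a polynomial `q = ∑ i, aᵢ xⁱ ∈ ℂ[x]`. -/
noncomputable def polyInt01 (q : Polynomial ℂ) : ℂ :=
  q.sum fun i a => a / ((i : ℂ) + 1)

/-- The degree-0 part `P⁰ = {f ∈ ℂ[x] : f(0) ∈ ℤ(p), f(1) = 0}` of the Deligne path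
complex of a point, as an additive subgroup of `ℂ[x]`. -/
noncomputable def pathP0 (p : ℕ) : AddSubgroup (Polynomial ℂ) :=
  ((tateLattice p).comap (Polynomial.evalRingHom (0 : ℂ)).toAddMonoidHom) ⊓
    ((⊥ : AddSubgroup ℂ).comap (Polynomial.evalRingHom (1 : ℂ)).toAddMonoidHom)

/-- The additive subgroup `{f' : f ∈ P⁰} ⊆ ℂ[x]` of derivatives of elements of `P⁰`. -/
noncomputable def derivPathP0 (p : ℕ) : AddSubgroup (Polynomial ℂ) :=
  AddSubgroup.map (Polynomial.derivative (R := ℂ)).toAddMonoidHom (pathP0 p)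

noncomputable def polyInt01Hom : Polynomial ℂ →+ ℂ where
  toFun := polyInt01
  map_zero' := by simp [polyInt01]
  map_add' q r := by
    show polyInt01 (q + r) = polyInt01 q + polyInt01 r
    unfold polyInt01
    rw [Polynomial.sum_add_index] <;> intros <;> simp [add_div]

lemma polyInt01_deriv (f : Polynomial ℂ) :
    polyInt01 (Polynomial.derivative f) = f.eval 1 - f.eval 0 := by
  induction f using Polynomial.induction_on' with
  | add p q hp hq =>
      have : polyInt01 (Polynomial.derivative (p + q))
          = polyInt01 (Polynomial.derivative p) + polyInt01 (Polynomial.derivative q) := by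
        rw [map_add]; exact polyInt01Hom.map_add _ _
      rw [this, hp, hq]; simp; ring
  | monomial n a =>
      rcases n with _ | m
      · simp [polyInt01]
      · rw [Polynomial.derivative_monomial]
        simp only [Nat.add_sub_cancel]
        have h1 : ((m : ℂ) + 1) ≠ 0 := Nat.cast_add_one_ne_zero m
        rw [polyInt01, Polynomial.sum_monomial_index]
        · push_cast
          rw [Polynomial.eval_monomial, Polynomial.eval_monomial]
          field_simp
          simp
        · simp

noncomputable def polyAntideriv (q : Polynomial ℂ) : Polynomial ℂ :=
  q.sum fun i a => Polynomial.monomial (i + 1) (a / ((i : ℂ) + 1))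

lemma polyAntideriv_deriv (q : Polynomial ℂ) :
    Polynomial.derivative (polyAntideriv q) = q := by
  unfold polyAntideriv Polynomial.sum
  rw [map_sum]
  conv_rhs => rw [← Polynomial.sum_monomial_eq q]
  unfold Polynomial.sum
  apply Finset.sum_congr rfl
  intro i _
  rw [Polynomial.derivative_monomial]
  have h1 : ((i : ℂ) + 1) ≠ 0 := Nat.cast_add_one_ne_zero i
  simp only [Nat.add_sub_cancel]
  push_cast
  rw [div_mul_cancel₀ _ h1]

lemma polyAntideriv_eval_zero (q : Polynomial ℂ) : (polyAntideriv q).eval 0 = 0 := by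
  unfold polyAntideriv Polynomial.sum
  rw [Polynomial.eval_finset_sum]
  apply Finset.sum_eq_zero
  intro i _
  simp

lemma polyAntideriv_eval_one (q : Polynomial ℂ) : (polyAntideriv q).eval 1 = polyInt01 q := by
  unfold polyAntideriv polyInt01 Polynomial.sum
  rw [Polynomial.eval_finset_sum]
  apply Finset.sum_congr rfl
  intro i _
  simp

/-- Fix an integer `p ≥ 1`, `Λ := (2πi)^p ℤ` and
`P⁰ := {f ∈ ℂ[x] : f(0) ∈ Λ, f(1) = 0}`.  Then (i) the only `f ∈ P⁰` with `f' = 0` is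
`f = 0`; (ii) the additive map `ℂ[x] → ℂ/Λ`, `q ↦ ∫₀¹ q mod Λ`, is surjective and its
kernel is exactly `{f' : f ∈ P⁰}`; consequently it induces an isomorphism of abelian
groups `ℂ[x]/{f' : f ∈ P⁰} ≃ ℂ/Λ`.  (This computes the weight-`p` Deligne–Beilinson
cohomology of a point: `H⁰ = 0` and `H¹ ≅ ℂ/ℤ(p)`.) -/
theorem deligne_cohomology_of_point (p : ℕ) (hp : 1 ≤ p) :
    -- (i) `H⁰ = 0`
    (∀ f : Polynomial ℂ,
      f.eval 0 ∈ tateLattice p → f.eval 1 = 0 → Polynomial.derivative f = 0 → f = 0) ∧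
    -- (ii) surjectivity
    Function.Surjective
      (fun q : Polynomial ℂ => (QuotientAddGroup.mk (polyInt01 q) : ℂ ⧸ tateLattice p)) ∧
    -- (ii) kernel = derivatives of elements of `P⁰`
    (∀ q : Polynomial ℂ,
      (QuotientAddGroup.mk (polyInt01 q) : ℂ ⧸ tateLattice p) = 0 ↔
        ∃ f : Polynomial ℂ, f.eval 0 ∈ tateLattice p ∧ f.eval 1 = 0 ∧
          Polynomial.derivative f = q) ∧
    -- consequence: `H¹ ≅ ℂ/ℤ(p)`
    Nonempty ((Polynomial ℂ ⧸ derivPathP0 p) ≃+ (ℂ ⧸ tateLattice p)) := by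
  have hker : ∀ q : Polynomial ℂ,
      (QuotientAddGroup.mk (polyInt01 q) : ℂ ⧸ tateLattice p) = 0 ↔
        ∃ f : Polynomial ℂ, f.eval 0 ∈ tateLattice p ∧ f.eval 1 = 0 ∧
          Polynomial.derivative f = q := by
    intro q
    rw [QuotientAddGroup.eq_zero_iff]
    constructor
    · intro hq
      refine ⟨polyAntideriv q - Polynomial.C (polyInt01 q), ?_, ?_, ?_⟩
      · simpa [polyAntideriv_eval_zero] using (tateLattice p).neg_mem hq
      · simp [polyAntideriv_eval_one]
      · have hC : Polynomial.derivative (Polynomial.C (polyInt01 q)) = 0 :=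
          Polynomial.derivative_C
        rw [map_sub, hC, sub_zero, polyAntideriv_deriv]
    · rintro ⟨f, h0, h1, rfl⟩
      rw [polyInt01_deriv, h1, zero_sub]
      exact (tateLattice p).neg_mem h0
  refine ⟨?_, ?_, hker, ?_⟩
  · intro f h0 h1 hd
    have hc := Polynomial.eq_C_of_derivative_eq_zero hd
    rw [hc] at h1 ⊢
    simp only [Polynomial.eval_C] at h1
    rw [h1]; simp
  · intro x
    obtain ⟨c, rfl⟩ := QuotientAddGroup.mk_surjective x
    exact ⟨Polynomial.C c, by simp [polyInt01, Polynomial.sum_C_index]⟩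
  · set φ : Polynomial ℂ →+ ℂ ⧸ tateLattice p :=
      (QuotientAddGroup.mk' (tateLattice p)).comp polyInt01Hom with hφ
    have hsurj : Function.Surjective φ := by
      intro x
      obtain ⟨c, rfl⟩ := QuotientAddGroup.mk_surjective x
      exact ⟨Polynomial.C c, by
        simp [hφ, polyInt01Hom, polyInt01, Polynomial.sum_C_index]⟩
    have hkereq : φ.ker = derivPathP0 p := by
      ext q
      rw [AddMonoidHom.mem_ker]
      have : φ q = (QuotientAddGroup.mk (polyInt01 q) : ℂ ⧸ tateLattice p) := rfl
      rw [this, hker q]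
      simp only [derivPathP0, AddSubgroup.mem_map, pathP0, AddSubgroup.mem_inf,
        AddSubgroup.mem_comap, RingHom.toAddMonoidHom_eq_coe, AddMonoidHom.coe_coe,
        Polynomial.coe_evalRingHom, AddSubgroup.mem_bot, LinearMap.toAddMonoidHom_coe,
        LinearMap.coe_mk]
      constructor
      · rintro ⟨f, h0, h1, hd⟩; exact ⟨f, ⟨h0, h1⟩, hd⟩
      · rintro ⟨f, ⟨h0, h1⟩, hd⟩; exact ⟨f, h0, h1, hd⟩
    exact ⟨((QuotientAddGroup.quotientAddEquivOfEq hkereq.symm).trans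
      (QuotientAddGroup.quotientKerEquivOfSurjective φ hsurj))⟩
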